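/- (Linear convergence of the flexible scheme) Under the assumptions of the flexible scheme (A SPD, each W_k full rank with g_k ∈ col(W_k), a_k = (W_kᵀA^{2ℓ+1}W_k)⁻¹W_kᵀA^{2ℓ}g_k, ω ∈ (0,2), x_{k+1} = x_k − ωW_k a_k), the gradients satisfy ‖g_{k+1}‖²_{A^{2ℓ−1}} ≤ c(ω)‖g_k‖²_{A^{2ℓ−1}} for all k, where c(ω) = 1 − ω(2−ω)·4κ/(κ+1)² and κ is the condition number of A; hence ‖g_k‖²_{A^{2ℓ−1}} ≤ c(ω)^k ‖g_0‖²_{A^{2ℓ−1}}. -/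

import Mathlib

open Matrix

private lemma dot_sym {n : ℕ} (M : Matrix (Fin n) (Fin n) ℝ) (hM : Mᵀ = M)
    (v w : Fin n → ℝ) : v ⬝ᵥ (M *ᵥ w) = w ⬝ᵥ (M *ᵥ v) := by
  rw [dotProduct_mulVec, ← mulVec_transpose, hM, dotProduct_comm]

private lemma mulVec_dot {n : ℕ} (M : Matrix (Fin n) (Fin n) ℝ) (x y : Fin n → ℝ) :
    (M *ᵥ x) ⬝ᵥ y = x ⬝ᵥ (Mᵀ *ᵥ y) := by
  rw [dotProduct_comm, dotProduct_mulVec, ← mulVec_transpose, dotProduct_comm]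

private lemma dot_self_pos {n : ℕ} {v : Fin n → ℝ} (hv : v ≠ 0) : 0 < v ⬝ᵥ v := by
  have h := dotProduct_star_self_pos_iff (R := ℝ) (n := Fin n) (v := v) |>.mpr hv
  simpa using h

private lemma posdef_pow {n : ℕ} (A : Matrix (Fin n) (Fin n) ℝ) (hA : A.PosDef) (q : ℕ) :
    (A ^ q).PosDef := by
  have hdet : IsUnit A.det := isUnit_iff_ne_zero.2 hA.det_pos.ne'
  have hAT : Aᵀ = A := by
    rw [← conjTranspose_eq_transpose_of_trivial]; exact hA.1
  have hpowT : ∀ r : ℕ, (A ^ r)ᵀ = A ^ r := by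
    intro r; rw [transpose_pow, hAT]
  have hinj : ∀ r : ℕ, ∀ v : Fin n → ℝ, v ≠ 0 → A ^ r *ᵥ v ≠ 0 := by
    intro r v hv h
    have h1 : IsUnit (A ^ r).det := by rw [det_pow]; exact hdet.pow r
    exact hv ((Matrix.mulVec_injective_iff_isUnit.2 ((Matrix.isUnit_iff_isUnit_det _).2 h1)) (by simpa using h))
  refine Matrix.PosDef.of_dotProduct_mulVec_pos (hA.posSemidef.pow q).isHermitian fun x hx => ?_
  have hsx : star x = x := by funext i; simp
  rcases Nat.even_or_odd q with ⟨r, hr⟩ | ⟨r, hr⟩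
  · have hq : A ^ q = A ^ r * A ^ r := by rw [← pow_add, hr]
    rw [hsx, hq, ← mulVec_mulVec, dotProduct_mulVec, ← mulVec_transpose, hpowT r]
    exact dot_self_pos (hinj r x hx)
  · have hq : A ^ q = A ^ r * (A * A ^ r) := by
      rw [hr, show 2 * r + 1 = r + (r + 1) by omega, pow_add, pow_succ']
    rw [hsx, hq, ← mulVec_mulVec, dotProduct_mulVec, ← mulVec_transpose, hpowT r,
      ← mulVec_mulVec]
    have := hA.dotProduct_mulVec_pos (hinj r x hx)
    rwa [show star (A ^ r *ᵥ x) = A ^ r *ᵥ x from funext fun i => by simp] at this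

private lemma quad_form {n : ℕ} (A : Matrix (Fin n) (Fin n) ℝ) (hA : A.PosDef) :
    ∃ (μ : Fin n → ℝ) (y : (Fin n → ℝ) → (Fin n → ℝ)),
      (∀ i, 0 < μ i) ∧
      (∀ i, ∃ v : Fin n → ℝ, v ⬝ᵥ v = 1 ∧ A *ᵥ v = μ i • v) ∧
      (∀ (w : Fin n → ℝ) (q : ℕ), w ⬝ᵥ (A ^ q *ᵥ w) = ∑ i, μ i ^ q * y w i ^ 2) ∧
      (∀ (w : Fin n → ℝ) (q : ℕ),
        w ⬝ᵥ ((A⁻¹ * A ^ q) *ᵥ w) = ∑ i, μ i ^ q / μ i * y w i ^ 2) := by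
  have hH := hA.isHermitian
  set V : Matrix (Fin n) (Fin n) ℝ := (hH.eigenvectorUnitary : Matrix (Fin n) (Fin n) ℝ) with hV
  set μ : Fin n → ℝ := hH.eigenvalues with hμdef
  have hμ : ∀ i, 0 < μ i := fun i => hA.eigenvalues_pos i
  have hstar : star V = Vᵀ := by
    rw [star_eq_conjTranspose, conjTranspose_eq_transpose_of_trivial]
  have hVtV : Vᵀ * V = 1 := by rw [← hstar]; exact Unitary.coe_star_mul_self hH.eigenvectorUnitary
  have hVVt : V * Vᵀ = 1 := by
    rw [← hstar]; exact Matrix.mem_unitaryGroup_iff.mp hH.eigenvectorUnitary.2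
  have hspecthm : A = V * diagonal μ * Vᵀ := by
    have h := hH.spectral_theorem
    rw [Unitary.conjStarAlgAut_apply] at h
    rw [← hstar]; exact h
  have hpow : ∀ q : ℕ, A ^ q = V * diagonal (fun i => μ i ^ q) * Vᵀ := by
    intro q
    induction q with
    | zero =>
      rw [pow_zero, show (fun i => μ i ^ 0) = fun _ => (1:ℝ) from funext fun i => pow_zero _,
        diagonal_one, Matrix.mul_one, hVVt]
    | succ q ih =>
      rw [pow_succ, ih, hspecthm]
      have : V * diagonal (fun i => μ i ^ q) * Vᵀ * (V * diagonal μ * Vᵀ)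
          = V * (diagonal (fun i => μ i ^ q) * (Vᵀ * V) * diagonal μ) * Vᵀ := by
        simp only [Matrix.mul_assoc]
      rw [this, hVtV, Matrix.mul_one, diagonal_mul_diagonal,
        show (fun i => μ i ^ q * μ i) = fun i => μ i ^ (q+1) from
          funext fun i => (pow_succ _ _).symm]
  have hinv : A⁻¹ = V * diagonal (fun i => (μ i)⁻¹) * Vᵀ := by
    apply inv_eq_right_inv
    rw [hspecthm]
    have : V * diagonal μ * Vᵀ * (V * diagonal (fun i => (μ i)⁻¹) * Vᵀ)
        = V * (diagonal μ * (Vᵀ * V) * diagonal (fun i => (μ i)⁻¹)) * Vᵀ := by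
      simp only [Matrix.mul_assoc]
    rw [this, hVtV, Matrix.mul_one, diagonal_mul_diagonal]
    have : (fun i => μ i * (μ i)⁻¹) = fun _ => (1 : ℝ) := by
      funext i; exact mul_inv_cancel₀ (hμ i).ne'
    rw [this, diagonal_one, Matrix.mul_one, hVVt]
  have hinvpow : ∀ q : ℕ, A⁻¹ * A ^ q = V * diagonal (fun i => μ i ^ q / μ i) * Vᵀ := by
    intro q
    rw [hinv, hpow q]
    have : V * diagonal (fun i => (μ i)⁻¹) * Vᵀ * (V * diagonal (fun i => μ i ^ q) * Vᵀ)
        = V * (diagonal (fun i => (μ i)⁻¹) * (Vᵀ * V) * diagonal (fun i => μ i ^ q)) * Vᵀ := by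
      simp only [Matrix.mul_assoc]
    rw [this, hVtV, Matrix.mul_one, diagonal_mul_diagonal,
      show (fun i => (μ i)⁻¹ * μ i ^ q) = fun i => μ i ^ q / μ i from
        funext fun i => by rw [div_eq_mul_inv, mul_comm]]
  have hquad : ∀ (d : Fin n → ℝ) (w : Fin n → ℝ),
      w ⬝ᵥ ((V * diagonal d * Vᵀ) *ᵥ w) = ∑ i, d i * (Vᵀ *ᵥ w) i ^ 2 := by
    intro d w
    rw [← mulVec_mulVec, ← mulVec_mulVec, dotProduct_mulVec, ← mulVec_transpose]
    simp only [dotProduct, mulVec_diagonal]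
    exact Finset.sum_congr rfl fun i _ => by ring
  refine ⟨μ, fun w => Vᵀ *ᵥ w, hμ, ?_, ?_, ?_⟩
  · intro i
    refine ⟨fun r => V r i, ?_, ?_⟩
    · have h := congrFun (congrFun hVtV i) i
      simpa [Matrix.mul_apply, Matrix.one_apply, dotProduct] using h
    · have hAV : A * V = V * diagonal μ := by
        rw [hspecthm]
        calc V * diagonal μ * Vᵀ * V = V * diagonal μ * (Vᵀ * V) := by
              simp only [Matrix.mul_assoc]
          _ = V * diagonal μ := by rw [hVtV, Matrix.mul_one]
      funext r
      have h := congrFun (congrFun hAV r) i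
      simp only [Matrix.mul_apply, diagonal_apply, Finset.sum_ite_eq, Finset.mem_univ,
        if_true] at h
      simpa [Matrix.mulVec, dotProduct, mul_comm] using h
  · intro w q; rw [hpow q, hquad]
  · intro w q; rw [hinvpow q, hquad]

private lemma kant {n : ℕ} (A : Matrix (Fin n) (Fin n) ℝ) (hA : A.PosDef)
    (lam1 lamn : ℝ) (hlamn : 0 < lamn) (hle : lamn ≤ lam1)
    (hspec : ∀ v : Fin n → ℝ, lamn * (v ⬝ᵥ v) ≤ v ⬝ᵥ (A *ᵥ v) ∧
      v ⬝ᵥ (A *ᵥ v) ≤ lam1 * (v ⬝ᵥ v))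
    (p : ℕ) (w : Fin n → ℝ) :
    0 ≤ w ⬝ᵥ ((A⁻¹ * A ^ p) *ᵥ w) ∧
    4 * lam1 * lamn * (w ⬝ᵥ ((A⁻¹ * A ^ p) *ᵥ w)) * (w ⬝ᵥ (A ^ (p+1) *ᵥ w))
      ≤ (lam1 + lamn) ^ 2 * (w ⬝ᵥ (A ^ p *ᵥ w)) ^ 2 := by
  obtain ⟨μ, y, hμ, hev, hq, hqi⟩ := quad_form A hA
  have hlam1 : 0 < lam1 := hlamn.trans_le hle
  have hbd : ∀ i, lamn ≤ μ i ∧ μ i ≤ lam1 := by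
    intro i
    obtain ⟨v, hv1, hv2⟩ := hev i
    have h1 := (hspec v).1
    have h2 := (hspec v).2
    rw [hv2, dotProduct_smul, hv1, smul_eq_mul, mul_one, mul_one] at h1 h2
    exact ⟨h1, h2⟩
  set e : Fin n → ℝ := fun i => μ i ^ p / μ i * y w i ^ 2 with he
  have he0 : ∀ i, 0 ≤ e i := fun i =>
    mul_nonneg (div_nonneg (pow_nonneg (hμ i).le _) (hμ i).le) (sq_nonneg _)
  have hQm : w ⬝ᵥ ((A⁻¹ * A ^ p) *ᵥ w) = ∑ i, e i := hqi w p
  have hP : w ⬝ᵥ (A ^ p *ᵥ w) = ∑ i, e i * μ i := by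
    rw [hq w p]
    refine Finset.sum_congr rfl fun i _ => ?_
    rw [he]; field_simp [(hμ i).ne']
  have hQp : w ⬝ᵥ (A ^ (p+1) *ᵥ w) = ∑ i, e i * μ i ^ 2 := by
    rw [hq w (p+1)]
    refine Finset.sum_congr rfl fun i _ => ?_
    rw [he]; field_simp [(hμ i).ne']; ring
  have hsum : (∑ i, e i * μ i ^ 2) + lam1 * lamn * (∑ i, e i)
      ≤ (lam1 + lamn) * ∑ i, e i * μ i := by
    rw [Finset.mul_sum, Finset.mul_sum, ← Finset.sum_add_distrib]
    refine Finset.sum_le_sum fun i _ => ?_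
    nlinarith [he0 i, (hbd i).1, (hbd i).2,
      mul_nonneg (mul_nonneg (he0 i) (sub_nonneg.2 (hbd i).1)) (sub_nonneg.2 (hbd i).2)]
  have ha0 : 0 ≤ ∑ i, e i * μ i ^ 2 :=
    Finset.sum_nonneg fun i _ => mul_nonneg (he0 i) (sq_nonneg _)
  have hb0 : 0 ≤ ∑ i, e i := Finset.sum_nonneg fun i _ => he0 i
  have hs0 : 0 ≤ ∑ i, e i * μ i :=
    Finset.sum_nonneg fun i _ => mul_nonneg (he0 i) (hμ i).le
  constructor
  · rw [hQm]; exact hb0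
  · rw [hQm, hP, hQp]
    set a := ∑ i, e i * μ i ^ 2
    set b := ∑ i, e i
    set s := ∑ i, e i * μ i
    have hab : 0 ≤ a + lam1 * lamn * b := by positivity
    have hsq : (a + lam1 * lamn * b) ^ 2 ≤ ((lam1 + lamn) * s) ^ 2 :=
      pow_le_pow_left₀ hab hsum 2
    nlinarith [sq_nonneg (a - lam1 * lamn * b), hsq]

private lemma mulVec_dot' {n m : ℕ} (M : Matrix (Fin n) (Fin m) ℝ) (x : Fin m → ℝ)
    (y : Fin n → ℝ) : (M *ᵥ x) ⬝ᵥ y = x ⬝ᵥ (Mᵀ *ᵥ y) := by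
  rw [dotProduct_comm, dotProduct_mulVec, ← mulVec_transpose, dotProduct_comm]

private lemma star_triv {n : ℕ} (v : Fin n → ℝ) : star v = v := funext fun i => by simp

private lemma step {n : ℕ} (A : Matrix (Fin n) (Fin n) ℝ) (hA : A.PosDef)
    (lam1 lamn : ℝ) (hlamn : 0 < lamn) (hle : lamn ≤ lam1)
    (hspec : ∀ v : Fin n → ℝ, lamn * (v ⬝ᵥ v) ≤ v ⬝ᵥ (A *ᵥ v) ∧
      v ⬝ᵥ (A *ᵥ v) ≤ lam1 * (v ⬝ᵥ v))
    (p : ℕ) (ω : ℝ) (hω0 : 0 < ω) (hω2 : ω < 2)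
    (m : ℕ) (W : Matrix (Fin n) (Fin m) ℝ)
    (hW : ∀ cv : Fin m → ℝ, W *ᵥ cv = 0 → cv = 0)
    (g : Fin n → ℝ) (hg : ∃ c0 : Fin m → ℝ, W *ᵥ c0 = g)
    (a : Fin m → ℝ)
    (ha : a = (Wᵀ * A ^ (p+1) * W)⁻¹ *ᵥ ((Wᵀ * A ^ p) *ᵥ g)) :
    (g - ω • (A *ᵥ (W *ᵥ a))) ⬝ᵥ ((A⁻¹ * A ^ p) *ᵥ (g - ω • (A *ᵥ (W *ᵥ a))))
      ≤ (1 - ω * (2 - ω) * (4 * (lam1 / lamn)) / ((lam1 / lamn) + 1) ^ 2)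
        * (g ⬝ᵥ ((A⁻¹ * A ^ p) *ᵥ g)) := by
  have hdet : IsUnit A.det := isUnit_iff_ne_zero.2 hA.det_pos.ne'
  have hAT : Aᵀ = A := by rw [← conjTranspose_eq_transpose_of_trivial]; exact hA.1
  have hpowT : ∀ r : ℕ, (A ^ r)ᵀ = A ^ r := fun r => by rw [transpose_pow, hAT]
  set z := A⁻¹ * A ^ p with hz
  have hzT : zᵀ = z := by
    rw [hz, transpose_mul, hpowT, transpose_nonsing_inv, hAT]
    have h := Matrix.pow_inv_comm' A 1 p
    simpa [pow_one] using h.symm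
  have hzA : z * A = A ^ p := by
    rw [hz, Matrix.mul_assoc, ← pow_succ, pow_succ', ← Matrix.mul_assoc,
      nonsing_inv_mul A hdet, Matrix.one_mul]
  set M := A ^ (p+1) with hM
  have hMpd : M.PosDef := posdef_pow A hA (p+1)
  have hMT : Mᵀ = M := hpowT (p+1)
  set N := Wᵀ * M * W with hN
  have hNpd : N.PosDef := by
    refine Matrix.PosDef.of_dotProduct_mulVec_pos ?_ ?_
    · show Nᴴ = N
      rw [conjTranspose_eq_transpose_of_trivial, hN, transpose_mul, transpose_mul,
        transpose_transpose, hMT, Matrix.mul_assoc]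
    · intro v hv
      have hWv : W *ᵥ v ≠ 0 := fun h => hv (hW v h)
      rw [star_triv, hN, ← mulVec_mulVec, ← mulVec_mulVec, dotProduct_mulVec,
        vecMul_transpose]
      have h := hMpd.dotProduct_mulVec_pos hWv
      rwa [star_triv] at h
  have hNdet : IsUnit N.det := isUnit_iff_ne_zero.2 hNpd.det_pos.ne'
  have hNa : N *ᵥ a = Wᵀ *ᵥ (A ^ p *ᵥ g) := by
    rw [ha, mulVec_mulVec, Matrix.mul_nonsing_inv _ hNdet, one_mulVec, ← mulVec_mulVec]
  set u := W *ᵥ a with hu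
  have hcol : ∀ y : Fin n → ℝ, (∃ cy : Fin m → ℝ, W *ᵥ cy = y) →
      y ⬝ᵥ (M *ᵥ u) = y ⬝ᵥ (A ^ p *ᵥ g) := by
    rintro y ⟨cy, rfl⟩
    rw [mulVec_dot', hu, mulVec_mulVec, mulVec_mulVec, ← hN, hNa, ← mulVec_dot']
  set S := u ⬝ᵥ (A ^ p *ᵥ g) with hSdef
  set P := g ⬝ᵥ (A ^ p *ᵥ g) with hPdef
  have hSu : u ⬝ᵥ (M *ᵥ u) = S := hcol u ⟨a, rfl⟩
  have hgP : g ⬝ᵥ (M *ᵥ u) = P := hcol g hg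
  have hexp : (g - ω • (A *ᵥ u)) ⬝ᵥ (z *ᵥ (g - ω • (A *ᵥ u)))
      = g ⬝ᵥ (z *ᵥ g) - ω * (2 - ω) * S := by
    have h1 : g ⬝ᵥ (z *ᵥ (A *ᵥ u)) = S := by
      rw [mulVec_mulVec u z A, hzA, dot_sym _ (hpowT p)]
    have h2 : (A *ᵥ u) ⬝ᵥ (z *ᵥ g) = S := by
      rw [dot_sym _ hzT, mulVec_mulVec u z A, hzA, dot_sym _ (hpowT p)]
    have h3 : (A *ᵥ u) ⬝ᵥ (z *ᵥ (A *ᵥ u)) = S := by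
      rw [mulVec_mulVec u z A, hzA, mulVec_dot, hAT, mulVec_mulVec u A (A ^ p),
        ← pow_succ', ← hM]
      exact hSu
    simp only [mulVec_sub, mulVec_smul, sub_dotProduct, dotProduct_sub, smul_dotProduct,
      dotProduct_smul, smul_eq_mul]
    rw [h1, h2, h3]
    ring
  by_cases hg0 : g = 0
  · have ha0 : a = 0 := by rw [ha, hg0, mulVec_zero, mulVec_zero]
    have hu0 : u = 0 := by rw [hu, ha0, mulVec_zero]
    rw [hg0, hu0, mulVec_zero, smul_zero, sub_zero, mulVec_zero, dotProduct_zero,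
      mul_zero]
  · have hQp : 0 < g ⬝ᵥ (M *ᵥ g) := by
      have h := hMpd.dotProduct_mulVec_pos hg0
      rwa [star_triv] at h
    obtain ⟨hQm0, hkant⟩ := kant A hA lam1 lamn hlamn hle hspec p g
    rw [← hz] at hQm0 hkant
    rw [← hM] at hkant
    set Qp := g ⬝ᵥ (M *ᵥ g) with hQpdef
    set Qm := g ⬝ᵥ (z *ᵥ g) with hQmdef
    have hSlb : P ^ 2 / Qp ≤ S := by
      set t := P / Qp with ht
      have h0 : 0 ≤ (u - t • g) ⬝ᵥ (M *ᵥ (u - t • g)) := by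
        have h := hMpd.posSemidef.dotProduct_mulVec_nonneg (u - t • g)
        rwa [star_triv] at h
      have hyu : (t • g) ⬝ᵥ (M *ᵥ u) = t * P := by
        rw [smul_dotProduct, hgP, smul_eq_mul]
      have huy : u ⬝ᵥ (M *ᵥ (t • g)) = t * P := by rw [dot_sym _ hMT, hyu]
      have hyy : (t • g) ⬝ᵥ (M *ᵥ (t • g)) = t ^ 2 * Qp := by
        rw [mulVec_smul, smul_dotProduct, dotProduct_smul, smul_eq_mul, smul_eq_mul,
          ← hQpdef]
        ring
      have hexpand : (u - t • g) ⬝ᵥ (M *ᵥ (u - t • g)) = S - 2 * t * P + t ^ 2 * Qp := by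
        rw [mulVec_sub, sub_dotProduct, dotProduct_sub, dotProduct_sub, hSu, hyu, huy, hyy]
        ring
      rw [hexpand] at h0
      have hteq : 2 * t * P - t ^ 2 * Qp = P ^ 2 / Qp := by
        rw [ht]; field_simp; ring
      linarith [hteq ▸ (by linarith : 2 * t * P - t ^ 2 * Qp ≤ S)]
    have hc2 : (0:ℝ) < (lam1 + lamn) ^ 2 := by
      have hpos : (0:ℝ) < lam1 + lamn := by linarith
      positivity
    have hr : 4 * (lam1 / lamn) / ((lam1 / lamn) + 1) ^ 2
        = 4 * lam1 * lamn / (lam1 + lamn) ^ 2 := by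
      field_simp
    have hrQ : 4 * (lam1 / lamn) / ((lam1 / lamn) + 1) ^ 2 * Qm ≤ S := by
      refine le_trans ?_ hSlb
      rw [← hPdef] at hkant
      rw [hr, div_mul_eq_mul_div, div_le_div_iff₀ hc2 hQp]
      nlinarith [hkant]
    rw [hexp]
    have hω : 0 < ω * (2 - ω) := by nlinarith
    have hfin := mul_le_mul_of_nonneg_left hrQ hω.le
    have hbridge : (1 - ω * (2 - ω) * (4 * (lam1 / lamn)) / ((lam1 / lamn) + 1) ^ 2) * Qm
        = Qm - ω * (2 - ω) * (4 * (lam1 / lamn) / ((lam1 / lamn) + 1) ^ 2 * Qm) := by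
      ring
    rw [hbridge]
    linarith [hfin]

/-- linear convergence of the flexible scheme: with A SPD with
spectrum in [λₙ,λ₁], κ = λ₁/λₙ, each W_k of full column rank with g_k ∈ col(W_k),
a_k = (W_kᵀA^{2ℓ+1}W_k)⁻¹W_kᵀA^{2ℓ}g_k, ω ∈ (0,2), x_{k+1} = x_k − ωW_k a_k, the
gradients g_k = Ax_k − b satisfy ‖g_{k+1}‖²_{A^{2ℓ−1}} ≤ c(ω)‖g_k‖²_{A^{2ℓ−1}}
and hence ‖g_k‖²_{A^{2ℓ−1}} ≤ c(ω)^k ‖g_0‖²_{A^{2ℓ−1}}. -/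
theorem stmt10 (n : ℕ) (A : Matrix (Fin n) (Fin n) ℝ) (hA : A.PosDef)
    (b : Fin n → ℝ)
    (lam1 lamn : ℝ) (hlamn : 0 < lamn) (hle : lamn ≤ lam1)
    (hspec : ∀ v : Fin n → ℝ, lamn * (v ⬝ᵥ v) ≤ v ⬝ᵥ (A *ᵥ v) ∧
      v ⬝ᵥ (A *ᵥ v) ≤ lam1 * (v ⬝ᵥ v))
    (κ : ℝ) (hκ : κ = lam1 / lamn)
    (p : ℕ) -- p = 2ℓ
    (ω : ℝ) (hω0 : 0 < ω) (hω2 : ω < 2)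
    (x : ℕ → Fin n → ℝ)
    (g : ℕ → Fin n → ℝ) (hgdef : ∀ k, g k = A *ᵥ x k - b)
    (mdim : ℕ → ℕ)
    (W : ∀ k : ℕ, Matrix (Fin n) (Fin (mdim k)) ℝ)
    (hWrank : ∀ k, LinearIndependent ℝ (fun j : Fin (mdim k) => (W k)ᵀ j))
    (hgcol : ∀ k, ∃ c : Fin (mdim k) → ℝ, W k *ᵥ c = g k)
    (a : ∀ k : ℕ, Fin (mdim k) → ℝ)
    (ha : ∀ k, a k = ((W k)ᵀ * A ^ (p + 1) * W k)⁻¹ *ᵥ (((W k)ᵀ * A ^ p) *ᵥ g k))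
    (hx : ∀ k, x (k + 1) = x k - ω • (W k *ᵥ a k))
    (c : ℝ) (hc : c = 1 - ω * (2 - ω) * (4 * κ) / (κ + 1) ^ 2) :
    (∀ k, g (k + 1) ⬝ᵥ (A ^ ((p : ℤ) - 1) *ᵥ g (k + 1)) ≤
        c * (g k ⬝ᵥ (A ^ ((p : ℤ) - 1) *ᵥ g k))) ∧
    (∀ k, g k ⬝ᵥ (A ^ ((p : ℤ) - 1) *ᵥ g k) ≤
        c ^ k * (g 0 ⬝ᵥ (A ^ ((p : ℤ) - 1) *ᵥ g 0))) := by
  have hdet : IsUnit A.det := isUnit_iff_ne_zero.2 hA.det_pos.ne'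
  have hzp : A ^ ((p : ℤ) - 1) = A⁻¹ * A ^ p := by
    rw [show ((p : ℤ) - 1) = (-1) + (p : ℤ) by ring, Matrix.zpow_add hdet,
      Matrix.zpow_neg_one, zpow_natCast]
  have hκ1 : 1 ≤ κ := by rw [hκ]; exact (one_le_div hlamn).2 hle
  have hc0 : 0 ≤ c := by
    rw [hc]
    have h1 : (0:ℝ) < (κ + 1) ^ 2 := by nlinarith
    have h4 : ω * (2 - ω) * (4 * κ) / (κ + 1) ^ 2 ≤ 1 := by
      rw [div_le_one h1]
      nlinarith [sq_nonneg (1 - ω), sq_nonneg (κ - 1), sq_nonneg ((1-ω)*(κ-1))]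
    linarith
  have hstep : ∀ k, g (k + 1) ⬝ᵥ (A ^ ((p : ℤ) - 1) *ᵥ g (k + 1)) ≤
      c * (g k ⬝ᵥ (A ^ ((p : ℤ) - 1) *ᵥ g k)) := by
    intro k
    have hg' : g (k + 1) = g k - ω • (A *ᵥ (W k *ᵥ a k)) := by
      rw [hgdef, hx, mulVec_sub, mulVec_smul, sub_right_comm, ← hgdef]
    have hW' : ∀ cv : Fin (mdim k) → ℝ, W k *ᵥ cv = 0 → cv = 0 := by
      intro cv hcv
      have hsum : ∑ j, cv j • (fun j' : Fin (mdim k) => (W k)ᵀ j') j = 0 := by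
        funext i
        have h0 := congrFun hcv i
        simp only [Matrix.mulVec, dotProduct, Pi.zero_apply] at h0
        simp only [Finset.sum_apply, Pi.smul_apply, Matrix.transpose_apply, smul_eq_mul,
          Pi.zero_apply]
        rw [← h0]
        exact Finset.sum_congr rfl fun j _ => mul_comm _ _
      have hz := Fintype.linearIndependent_iff.1 (hWrank k) cv hsum
      funext i; exact hz i
    have h := step A hA lam1 lamn hlamn hle hspec p ω hω0 hω2 (mdim k) (W k) hW' (g k)
      (hgcol k) (a k) (ha k)
    rw [hzp, hg', hc, hκ]
    exact h
  refine ⟨hstep, ?_⟩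
  intro k
  induction k with
  | zero => simp
  | succ k ih =>
    calc g (k + 1) ⬝ᵥ (A ^ ((p : ℤ) - 1) *ᵥ g (k + 1))
        ≤ c * (g k ⬝ᵥ (A ^ ((p : ℤ) - 1) *ᵥ g k)) := hstep k
      _ ≤ c * (c ^ k * (g 0 ⬝ᵥ (A ^ ((p : ℤ) - 1) *ᵥ g 0))) :=
          mul_le_mul_of_nonneg_left ih hc0
      _ = c ^ (k + 1) * (g 0 ⬝ᵥ (A ^ ((p : ℤ) - 1) *ᵥ g 0)) := by ring
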